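/- (Algebraic core of the paper's Theorem 3.2, via Kosniowski's formula.) Let p be a prime, n, r ≥ 1, and suppose given for each i = 1,…,r nonzero elements k_1^{(i)},…,k_n^{(i)} ∈ ℤ/pℤ ∖ {0} (the weights at the fixed points) and a sign ε_i ∈ {+1, −1}, and an integer C_λ for each partition λ of weight at most n (the Chern numbers). Define in ℤ/pℤ: μ_i := ε_i · (∏_{j=1}^n k_j^{(i)})^{−1} and a_j^{(i)} := e_j(k_1^{(i)},…,k_n^{(i)}) for 1 ≤ j ≤ n, where e_j is the j-th elementary symmetric polynomial. Assume the congruences ∑_{i=1}^r μ_i · a_λ^{(i)} ≡ C_λ (mod p) hold for every partition λ of weight at most n, and that C_λ = 0 whenever the weight of λ is strictly less than n. If λ is a partition of weight n such that C_λ is not divisible by p, then r ≥ m(λ) + 1. -/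

import Mathlib

/-- **algebraic core of Theorem 3.2, via Kosniowski's formula.**
`p` is a prime; `k i j` (`j` ranging over `Fin n`) are the nonzero weights in
`ℤ/pℤ` of the `ℤ_p`-representation at the `i`-th fixed point; `ε i = ±1` is the
orientation sign; `C m` is the Chern number attached to the partition with multiplicity
vector `m : Fin n → ℕ` (index `j` stands for part size `j+1`; weight is
`∑ j, (j+1) * m j`, `m(λ) = Finset.univ.sup m`). In `ℤ/pℤ` define
`μ i = ε i * (∏ j, k i j)⁻¹` and `a i j = e_{j+1}(k i 1, …, k i n)`, where `e_{j+1}`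
is the `(j+1)`-st elementary symmetric polynomial (written out as a sum over subsets of
cardinality `j+1`). Assuming Kosniowski's congruences
`∑ i, μ i * ∏ j, (a i j)^(m j) = C m (mod p)` for all partitions of weight `≤ n`, and
that `C m = 0` for partitions of weight `< n`: if `λ` has weight `n` and `p ∤ C λ`,
then the number of fixed points satisfies `r ≥ m(λ) + 1`. -/
theorem zmod_p_action_fixed_points_lower_bound
    (p : ℕ) (hp : p.Prime) (n r : ℕ) (hn : 1 ≤ n) (hr : 1 ≤ r)
    (k : Fin r → Fin n → ZMod p)
    (hk : ∀ i j, k i j ≠ 0)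
    (ε : Fin r → ℤ)
    (hε : ∀ i, ε i = 1 ∨ ε i = -1)
    (C : (Fin n → ℕ) → ℤ)
    (μ : Fin r → ZMod p) (a : Fin r → Fin n → ZMod p)
    (hμ : ∀ i, μ i = (ε i : ZMod p) * (∏ j, k i j)⁻¹)
    (ha : ∀ i (j : Fin n), a i j =
      ∑ S ∈ Finset.univ.powersetCard (j.1 + 1), ∏ t ∈ S, k i t)
    (hloc : ∀ m : Fin n → ℕ, (∑ j, (j.1 + 1) * m j) ≤ n →
      ∑ i, μ i * ∏ j, (a i j) ^ (m j) = (C m : ZMod p))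
    (hvanish : ∀ m : Fin n → ℕ, (∑ j, (j.1 + 1) * m j) < n → C m = 0)
    (m : Fin n → ℕ)
    (hweight : (∑ j, (j.1 + 1) * m j) = n)
    (hC : ¬ (p : ℤ) ∣ C m) :
    Finset.univ.sup m + 1 ≤ r := by
  haveI : Fact p.Prime := ⟨hp⟩
  by_contra hlt
  push_neg at hlt
  obtain ⟨j₀, -, hj₀⟩ := Finset.exists_mem_eq_sup Finset.univ
    (⟨⟨0, hn⟩, Finset.mem_univ _⟩ : (Finset.univ : Finset (Fin n)).Nonempty) m
  have hrN : r ≤ m j₀ := by omega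
  set N := m j₀ with hN
  set x : Fin r → ZMod p := fun i => a i j₀ with hxdef
  set v : Fin r → ZMod p := fun i => μ i * ∏ j ∈ Finset.univ.erase j₀, (a i j) ^ (m j) with hvdef
  -- weight computation
  have hWm : (∑ j, (j.1 + 1) * m j) =
      (j₀.1 + 1) * N + ∑ j ∈ Finset.univ.erase j₀, (j.1 + 1) * m j := by
    rw [← Finset.add_sum_erase _ _ (Finset.mem_univ j₀)]
  have hWupd : ∀ s : ℕ, (∑ j, (j.1 + 1) * Function.update m j₀ s j) =
      (j₀.1 + 1) * s + ∑ j ∈ Finset.univ.erase j₀, (j.1 + 1) * m j := by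
    intro s
    rw [← Finset.add_sum_erase _ _ (Finset.mem_univ j₀), Function.update_self]
    congr 1
    exact Finset.sum_congr rfl fun j hj => by
      rw [Function.update_of_ne (Finset.ne_of_mem_erase hj)]
  -- the key T values
  have hkey : ∀ s : ℕ, s ≤ N →
      ∑ i, v i * x i ^ s = (C (Function.update m j₀ s) : ZMod p) := by
    intro s hs
    have hle : (∑ j, (j.1 + 1) * Function.update m j₀ s j) ≤ n := by
      rw [hWupd s]; rw [hWm] at hweight
      have : (j₀.1 + 1) * s ≤ (j₀.1 + 1) * N := Nat.mul_le_mul_left _ hs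
      omega
    rw [← hloc _ hle]
    refine Finset.sum_congr rfl fun i _ => ?_
    rw [← Finset.mul_prod_erase _ _ (Finset.mem_univ j₀), Function.update_self]
    have : ∏ j ∈ Finset.univ.erase j₀, (a i j) ^ (Function.update m j₀ s j) =
        ∏ j ∈ Finset.univ.erase j₀, (a i j) ^ (m j) :=
      Finset.prod_congr rfl fun j hj => by
        rw [Function.update_of_ne (Finset.ne_of_mem_erase hj)]
    rw [this]; simp only [hvdef, hxdef]; ring
  have hzero : ∀ s : ℕ, s < N → ∑ i, v i * x i ^ s = 0 := by
    intro s hs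
    rw [hkey s hs.le, hvanish]
    · simp
    · rw [hWupd s]; rw [hWm] at hweight
      have : (j₀.1 + 1) * s < (j₀.1 + 1) * N := by
        first
        | exact (mul_lt_mul_left (Nat.succ_pos j₀.1)).mpr hs
        | exact Nat.mul_lt_mul_of_lt_of_le le_rfl hs (Nat.succ_pos _)
        | exact (Nat.mul_lt_mul_left (Nat.succ_pos _)).mpr hs
      omega
  have hTN : ∑ i, v i * x i ^ N = (C m : ZMod p) := by
    rw [hkey N le_rfl, Function.update_eq_self]
  -- polynomial argument
  set P : Polynomial (ZMod p) := ∏ i, (Polynomial.X - Polynomial.C (x i)) with hPdef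
  have hPmonic : P.Monic :=
    Polynomial.monic_prod_of_monic _ _ fun i _ => Polynomial.monic_X_sub_C _
  have hPdeg : P.natDegree = r := by
    rw [hPdef, Polynomial.natDegree_prod_of_monic _ _
      fun i _ => Polynomial.monic_X_sub_C _,
      Finset.sum_congr rfl fun i _ => Polynomial.natDegree_X_sub_C (x i)]
    simp
  set R : Polynomial (ZMod p) := (Polynomial.X ^ N) %ₘ P with hRdef
  have hRdeg : R.natDegree < r := by
    rw [← hPdeg]
    refine Polynomial.natDegree_modByMonic_lt _ hPmonic ?_
    intro h1
    rw [h1] at hPdeg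
    simp at hPdeg; omega
  have hx : ∀ i, x i ^ N = R.eval (x i) := by
    intro i
    have h := Polynomial.modByMonic_add_div (Polynomial.X ^ N) P
    have hP0 : P.eval (x i) = 0 := by
      rw [hPdef, Polynomial.eval_prod]
      exact Finset.prod_eq_zero (Finset.mem_univ i) (by simp)
    have := congrArg (Polynomial.eval (x i)) h
    simpa [hP0] using this.symm
  have hCz : (C m : ZMod p) = 0 := by
    rw [← hTN]
    calc ∑ i, v i * x i ^ N = ∑ i, v i * R.eval (x i) := by
          refine Finset.sum_congr rfl fun i _ => by rw [hx i]
      _ = ∑ i, ∑ s ∈ Finset.range r, v i * (R.coeff s * x i ^ s) := by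
          refine Finset.sum_congr rfl fun i _ => ?_
          rw [Polynomial.eval_eq_sum_range' hRdeg, Finset.mul_sum]
      _ = ∑ s ∈ Finset.range r, R.coeff s * ∑ i, v i * x i ^ s := by
          rw [Finset.sum_comm]
          refine Finset.sum_congr rfl fun s _ => ?_
          rw [Finset.mul_sum]
          exact Finset.sum_congr rfl fun i _ => by ring
      _ = 0 := by
          refine Finset.sum_eq_zero fun s hs => ?_
          rw [hzero s (lt_of_lt_of_le (Finset.mem_range.mp hs) hrN), mul_zero]
  rw [ZMod.intCast_zmod_eq_zero_iff_dvd] at hCz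
  exact hC hCz
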